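/- Let Y be standard Gaussian in R^p, p ≥ 2, and λ_1, ..., λ_p > 0. Then for i ≠ j, E[λ_i Y_i² λ_j Y_j² / (Σ_k λ_k Y_k²)²] = (λ_i λ_j / 4) ∫_0^∞ x dx / ( (1 + λ_i x)(1 + λ_j x) ∏_{k=1}^p (1 + λ_k x)^{1/2} ). -/

import Mathlib

open MeasureTheory ProbabilityTheory Real

/-- The law of a vector of `p` i.i.d. standard normal random variables. -/
noncomputable def stdGaussianPi (p : ℕ) : Measure (Fin p → ℝ) :=
  Measure.pi fun _ => gaussianReal 0 1

/-- The `i`-th eigenvalue of the spatial sign covariance matrix corresponding to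
shape eigenvalues `lam`. -/
noncomputable def sscmEigen (p : ℕ) (lam : Fin p → ℝ) (i : Fin p) : ℝ :=
  ∫ ω, lam i * (ω i) ^ 2 / (∑ j, lam j * (ω j) ^ 2) ∂(stdGaussianPi p)

open Set
open scoped ENNReal NNReal

lemma gauss_integral_eq (g : ℝ → ℝ) :
    ∫ y, g y ∂(gaussianReal 0 1) = ∫ y, gaussianPDFReal 0 1 y * g y := by
  rw [gaussianReal_of_var_ne_zero 0 one_ne_zero]
  rw [show gaussianPDF 0 1 = fun x => ((Real.toNNReal (gaussianPDFReal 0 1 x) : ℝ≥0∞))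
    from rfl]
  rw [integral_withDensity_eq_integral_smul
    ((measurable_gaussianPDFReal 0 1).real_toNNReal) g]
  congr 1; funext y
  rw [NNReal.smul_def, Real.coe_toNNReal _ (gaussianPDFReal_nonneg _ _ _), smul_eq_mul]

lemma gauss_pdf_eq : gaussianPDFReal 0 1 = fun y => (Real.sqrt (2 * π))⁻¹ * Real.exp (-y ^ 2 / 2) := by
  funext y
  simp [gaussianPDFReal]

lemma gauss_exp_moment {a : ℝ} (ha : 0 < a) :
    ∫ y, Real.exp (-(a * y ^ 2)) ∂(gaussianReal 0 1) = 1 / Real.sqrt (1 + 2 * a) := by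
  have hb : 0 < a + 1 / 2 := by linarith
  rw [gauss_integral_eq, gauss_pdf_eq]
  have h1 : ∀ y : ℝ, (Real.sqrt (2 * π))⁻¹ * Real.exp (-y ^ 2 / 2) * Real.exp (-(a * y ^ 2))
      = (Real.sqrt (2 * π))⁻¹ * Real.exp (-(a + 1 / 2) * y ^ 2) := by
    intro y
    rw [mul_assoc, ← Real.exp_add]
    congr 2
    ring
  simp_rw [h1]
  rw [integral_const_mul, integral_gaussian]
  rw [show 1 + 2 * a = 2 * (a + 1 / 2) by ring]
  rw [Real.sqrt_mul (by norm_num : (0:ℝ) ≤ 2), Real.sqrt_mul (by norm_num : (0:ℝ) ≤ 2),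
    Real.sqrt_div Real.pi_pos.le]
  have h2 : Real.sqrt π ≠ 0 := by positivity
  have h3 : Real.sqrt (a + 1 / 2) ≠ 0 := by positivity
  have h4 : Real.sqrt 2 ≠ 0 := by positivity
  field_simp

lemma sq_gauss {b : ℝ} (hb : 0 < b) :
    ∫ y : ℝ, y ^ 2 * Real.exp (-b * y ^ 2) = Real.sqrt π / 2 * (b * Real.sqrt b)⁻¹ := by
  have h0 : (∫ y : ℝ, y ^ 2 * Real.exp (-b * y ^ 2))
      = 2 * ∫ y in Ioi (0:ℝ), y ^ 2 * Real.exp (-b * y ^ 2) := by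
    rw [← integral_comp_abs (f := fun y => y ^ 2 * Real.exp (-b * y ^ 2))]
    congr 1; funext y
    rw [sq_abs]
  rw [h0]
  have h1 : (∫ y in Ioi (0:ℝ), y ^ 2 * Real.exp (-b * y ^ 2))
      = ∫ y in Ioi (0:ℝ), y ^ (2:ℝ) * Real.exp (-b * y ^ (2:ℝ)) := by
    refine setIntegral_congr_fun measurableSet_Ioi fun y hy => ?_
    rw [show ((2:ℝ)) = ((2:ℕ):ℝ) by norm_num, Real.rpow_natCast]
  rw [h1, integral_rpow_mul_exp_neg_mul_rpow (by norm_num) (by norm_num) hb]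
  have h2 : Real.Gamma ((2 + 1) / 2) = Real.sqrt π / 2 := by
    rw [show ((2:ℝ) + 1) / 2 = 1 / 2 + 1 by norm_num, Real.Gamma_add_one (by norm_num),
      Real.Gamma_one_half_eq]
    ring
  rw [h2]
  have h3 : b ^ (-(2 + 1) / 2 : ℝ) = (b * Real.sqrt b)⁻¹ := by
    rw [show (-(2 + 1) / 2 : ℝ) = -(1 + 1/2) by norm_num, Real.rpow_neg hb.le,
      Real.rpow_add hb, Real.rpow_one, ← Real.sqrt_eq_rpow]
  rw [h3]
  ring

lemma gauss_sq_moment {a : ℝ} (ha : 0 < a) :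
    ∫ y, y ^ 2 * Real.exp (-(a * y ^ 2)) ∂(gaussianReal 0 1)
      = 1 / ((1 + 2 * a) * Real.sqrt (1 + 2 * a)) := by
  have hb : 0 < a + 1 / 2 := by linarith
  rw [gauss_integral_eq, gauss_pdf_eq]
  have h1 : ∀ y : ℝ, (Real.sqrt (2 * π))⁻¹ * Real.exp (-y ^ 2 / 2) * (y ^ 2 * Real.exp (-(a * y ^ 2)))
      = (Real.sqrt (2 * π))⁻¹ * (y ^ 2 * Real.exp (-(a + 1 / 2) * y ^ 2)) := by
    intro y
    rw [show (-(a + 1 / 2) * y ^ 2) = (-y ^ 2 / 2) + (-(a * y ^ 2)) by ring, Real.exp_add]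
    ring
  simp_rw [h1]
  rw [integral_const_mul, sq_gauss hb]
  rw [show 1 + 2 * a = 2 * (a + 1 / 2) by ring]
  rw [Real.sqrt_mul (by norm_num : (0:ℝ) ≤ 2), Real.sqrt_mul (by norm_num : (0:ℝ) ≤ 2)]
  have h2 : Real.sqrt π ≠ 0 := by positivity
  have h3 : Real.sqrt (a + 1 / 2) ≠ 0 := by positivity
  have h4 : Real.sqrt 2 ≠ 0 := by positivity
  have h5 : Real.sqrt π * Real.sqrt π = π := Real.mul_self_sqrt Real.pi_pos.le
  field_simp

instance : NullSingletonClass (gaussianReal 0 1) :=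
  ⟨fun x => gaussianReal_absolutelyContinuous 0 one_ne_zero (measure_singleton x)⟩

lemma gauss_pi_prod (p : ℕ) (f : Fin p → ℝ → ℝ) :
    ∫ ω, ∏ k, f k (ω k) ∂(Measure.pi fun _ : Fin p => gaussianReal 0 1)
      = ∏ k, ∫ y, f k y ∂(gaussianReal 0 1) := by
  letI : MeasureSpace ℝ := ⟨gaussianReal 0 1⟩
  haveI : SigmaFinite (volume : Measure ℝ) := inferInstanceAs (SigmaFinite (gaussianReal 0 1))
  exact MeasureTheory.integral_fintype_prod_eq_prod (𝕜 := ℝ) (E := fun _ => ℝ) f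

theorem eta_offdiag_integral_repr (p : ℕ) (hp : 2 ≤ p) (lam : Fin p → ℝ)
    (hpos : ∀ i, 0 < lam i) (i j : Fin p) (hij : i ≠ j) :
    (∫ ω, lam i * (ω i) ^ 2 * (lam j * (ω j) ^ 2) / (∑ k, lam k * (ω k) ^ 2) ^ 2
        ∂(stdGaussianPi p)) =
      lam i * lam j / 4 *
        ∫ x in Set.Ioi (0 : ℝ),
          x / ((1 + lam i * x) * (1 + lam j * x) * ∏ k, Real.sqrt (1 + lam k * x)) := by
  classical
  set μp := stdGaussianPi p with hμp
  haveI : IsProbabilityMeasure μp :=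
    inferInstanceAs (IsProbabilityMeasure (Measure.pi fun _ : Fin p => gaussianReal 0 1))
  set S : (Fin p → ℝ) → ℝ := fun ω => ∑ k, lam k * (ω k) ^ 2 with hS
  set c : (Fin p → ℝ) → ℝ := fun ω => lam i * (ω i) ^ 2 * (lam j * (ω j) ^ 2) with hc
  set r : ℝ → ℝ := fun x =>
    x / ((1 + lam i * x) * (1 + lam j * x) * ∏ k, Real.sqrt (1 + lam k * x)) with hr
  have hterm : ∀ (ω : Fin p → ℝ) (k : Fin p), 0 ≤ lam k * (ω k) ^ 2 :=
    fun ω k => mul_nonneg (hpos k).le (sq_nonneg _)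
  have hc0 : ∀ ω, 0 ≤ c ω := fun ω => mul_nonneg (hterm ω i) (hterm ω j)
  have hS0 : ∀ ω, 0 ≤ S ω := fun ω => Finset.sum_nonneg fun k _ => hterm ω k
  -- S > 0 a.e.
  have h0 : ∀ᵐ ω ∂μp, 0 < S ω := by
    have h1 : ∀ᵐ ω ∂(Measure.pi fun _ : Fin p => gaussianReal 0 1), ω i ≠ (0 : ℝ) :=
      MeasureTheory.Measure.ae_eval_ne _ i 0
    filter_upwards [h1] with ω hω
    have h2 : 0 < (ω i) ^ 2 := lt_of_le_of_ne (sq_nonneg _) (Ne.symm (pow_ne_zero 2 hω))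
    have h3 : 0 < lam i * (ω i) ^ 2 := mul_pos (hpos i) h2
    exact lt_of_lt_of_le h3
      (Finset.single_le_sum (fun k _ => hterm ω k) (Finset.mem_univ i))
  -- c ≤ S ^ 2
  have hcS : ∀ ω, c ω ≤ S ω ^ 2 := by
    intro ω
    have hi : lam i * (ω i) ^ 2 ≤ S ω :=
      Finset.single_le_sum (fun k _ => hterm ω k) (Finset.mem_univ i)
    have hj : lam j * (ω j) ^ 2 ≤ S ω :=
      Finset.single_le_sum (fun k _ => hterm ω k) (Finset.mem_univ j)
    calc c ω ≤ S ω * S ω := mul_le_mul hi hj (hterm ω j) (hS0 ω)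
    _ = S ω ^ 2 := (sq (S ω)).symm
  -- Integrability of the t-integrand
  have hGint : ∀ ω, 0 < S ω →
      IntegrableOn (fun t => c ω * (t * Real.exp (-(S ω * t)))) (Ioi (0:ℝ)) := by
    intro ω hSω
    have base : IntegrableOn (fun x : ℝ => Real.exp (-x) * x) (Ioi 0) := by
      have h := Real.GammaIntegral_convergent (s := 2) (by norm_num)
      refine h.congr_fun (fun x hx => ?_) measurableSet_Ioi
      norm_num
    have comp : IntegrableOn (fun t : ℝ => Real.exp (-(S ω * t)) * (S ω * t)) (Ioi 0) := by
      have := (integrableOn_Ioi_comp_mul_left_iff (fun x : ℝ => Real.exp (-x) * x) 0 hSω).mpr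
      simpa using this (by simpa using base)
    have heq : (fun t : ℝ => c ω * (t * Real.exp (-(S ω * t))))
        = fun t => (c ω / S ω) * (Real.exp (-(S ω * t)) * (S ω * t)) := by
      funext t
      field_simp
    rw [heq]
    exact comp.const_mul _
  -- pointwise representation
  have hrepr : ∀ ω, 0 < S ω →
      c ω / S ω ^ 2 = ∫ t in Ioi (0:ℝ), c ω * (t * Real.exp (-(S ω * t))) := by
    intro ω hSω
    rw [integral_const_mul]
    have h2 : (∫ t in Ioi (0:ℝ), t * Real.exp (-(S ω * t))) = (1 / S ω) ^ 2 := by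
      have h3 := Real.integral_rpow_mul_exp_neg_mul_Ioi (a := 2) (r := S ω) (by norm_num) hSω
      have h4 : (∫ t in Ioi (0:ℝ), t * Real.exp (-(S ω * t)))
          = ∫ t in Ioi (0:ℝ), t ^ ((2:ℝ) - 1) * Real.exp (-(S ω * t)) := by
        refine setIntegral_congr_fun measurableSet_Ioi fun t ht => ?_
        norm_num
      rw [h4, h3, Real.Gamma_two, mul_one, show ((2:ℝ)) = ((2:ℕ):ℝ) by norm_num,
        Real.rpow_natCast]
    rw [h2]
    field_simp
  -- measurability
  have hSmeas : Measurable S := by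
    apply Finset.measurable_sum
    intro k _
    exact (measurable_const.mul ((measurable_pi_apply k).pow measurable_const))
  have hmeas : Measurable (fun q : (Fin p → ℝ) × ℝ => c q.1 * (q.2 * Real.exp (-(S q.1 * q.2)))) := by
    apply Measurable.mul
    · apply Measurable.mul
      · exact (measurable_const.mul (((measurable_pi_apply i).comp measurable_fst).pow
          measurable_const))
      · exact (measurable_const.mul (((measurable_pi_apply j).comp measurable_fst).pow
          measurable_const))
    · exact measurable_snd.mul
        (Real.measurable_exp.comp ((hSmeas.comp measurable_fst).mul measurable_snd).neg)
  -- product integrability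
  have hInt : Integrable (Function.uncurry fun ω t => c ω * (t * Real.exp (-(S ω * t))))
      (μp.prod (volume.restrict (Ioi 0))) := by
    constructor
    · exact hmeas.aestronglyMeasurable
    · rw [HasFiniteIntegral]
      have huncurry : (fun a : (Fin p → ℝ) × ℝ =>
          (‖Function.uncurry (fun ω t => c ω * (t * Real.exp (-(S ω * t)))) a‖ₑ : ℝ≥0∞))
          = fun a : (Fin p → ℝ) × ℝ =>
            (‖c a.1 * (a.2 * Real.exp (-(S a.1 * a.2)))‖ₑ : ℝ≥0∞) := rfl
      rw [huncurry, lintegral_prod _ hmeas.enorm.aemeasurable]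
      have hbound : ∀ᵐ ω ∂μp,
          (∫⁻ t in Ioi (0:ℝ), (‖c ω * (t * Real.exp (-(S ω * t)))‖ₑ : ℝ≥0∞)) ≤ 1 := by
        filter_upwards [h0] with ω hSω
        have ha : (∫⁻ t in Ioi (0:ℝ), (‖c ω * (t * Real.exp (-(S ω * t)))‖ₑ : ℝ≥0∞))
            = ∫⁻ t in Ioi (0:ℝ), ENNReal.ofReal (c ω * (t * Real.exp (-(S ω * t)))) := by
          refine setLIntegral_congr_fun measurableSet_Ioi (fun t ht => ?_)
          rw [← Real.enorm_eq_ofReal]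
          exact mul_nonneg (hc0 ω) (mul_nonneg (le_of_lt ht) (Real.exp_pos _).le)
        rw [ha, ← ofReal_integral_eq_lintegral_ofReal (hGint ω hSω)
          ((ae_restrict_iff' measurableSet_Ioi).2 (ae_of_all _ fun t ht =>
            mul_nonneg (hc0 ω) (mul_nonneg (le_of_lt ht) (Real.exp_pos _).le)))]
        rw [← hrepr ω hSω]
        refine ENNReal.ofReal_le_one.2 ?_
        rw [div_le_one (by positivity)]
        exact hcS ω
      calc (∫⁻ ω, (∫⁻ t in Ioi (0:ℝ),
            (‖c ω * (t * Real.exp (-(S ω * t)))‖ₑ : ℝ≥0∞)) ∂μp)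
          ≤ ∫⁻ _, 1 ∂μp := lintegral_mono_ae hbound
        _ = 1 := by
            haveI : IsProbabilityMeasure μp :=
              inferInstanceAs (IsProbabilityMeasure (Measure.pi fun _ : Fin p => gaussianReal 0 1))
            simp
        _ < ⊤ := ENNReal.one_lt_top
  -- step 5 : value of the inner integral for t > 0
  have hstep5 : ∀ t : ℝ, t ∈ Ioi (0:ℝ) →
      (∫ ω, c ω * (t * Real.exp (-(S ω * t))) ∂μp) = lam i * lam j / 2 * r (2 * t) := by
    intro t ht
    rw [mem_Ioi] at ht
    set f : Fin p → ℝ → ℝ := fun k y =>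
      (if k = i ∨ k = j then lam k * y ^ 2 else 1) * Real.exp (-(lam k * t * y ^ 2)) with hf
    have hsplit : ∀ (g : Fin p → ℝ) (k : Fin p),
        (if k = i ∨ k = j then g k else 1)
          = (if k = i then g i else 1) * (if k = j then g j else 1) := by
      intro g k
      by_cases hki : k = i
      · subst hki
        simp [hij]
      · by_cases hkj : k = j
        · subst hkj
          simp [hki]
        · simp [hki, hkj]
    have hfact : ∀ ω, c ω * (t * Real.exp (-(S ω * t))) = t * ∏ k, f k (ω k) := by
      intro ω
      have hprod : (∏ k, f k (ω k)) = c ω * Real.exp (-(S ω * t)) := by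
        rw [hf]
        simp only
        rw [Finset.prod_mul_distrib]
        congr 1
        · calc (∏ k, if k = i ∨ k = j then lam k * (ω k) ^ 2 else 1)
              = ∏ k, ((if k = i then lam i * (ω i) ^ 2 else 1) *
                  (if k = j then lam j * (ω j) ^ 2 else 1)) :=
              Finset.prod_congr rfl fun k _ => hsplit (fun k => lam k * (ω k) ^ 2) k
            _ = c ω := by
              rw [Finset.prod_mul_distrib, Finset.prod_ite_eq' Finset.univ i
                (fun _ => lam i * (ω i) ^ 2), Finset.prod_ite_eq' Finset.univ j
                (fun _ => lam j * (ω j) ^ 2)]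
              simp [hc]
        · rw [← Real.exp_sum]
          congr 1
          rw [hS]
          simp only
          rw [Finset.sum_mul, ← Finset.sum_neg_distrib]
          exact Finset.sum_congr rfl fun k _ => by ring
      rw [hprod]
      ring
    simp_rw [hfact]
    rw [integral_const_mul, hμp, stdGaussianPi, gauss_pi_prod]
    have hval : ∀ k, (∫ y, f k y ∂(gaussianReal 0 1))
        = (if k = i ∨ k = j then lam k / (1 + 2 * (lam k * t)) else 1) *
            (1 / Real.sqrt (1 + 2 * (lam k * t))) := by
      intro k
      have ha : 0 < lam k * t := mul_pos (hpos k) ht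
      by_cases hk : k = i ∨ k = j
      · simp only [hf, hk, if_true]
        have h1 : ∀ y : ℝ, lam k * y ^ 2 * Real.exp (-(lam k * t * y ^ 2))
            = lam k * (y ^ 2 * Real.exp (-(lam k * t * y ^ 2))) := fun y => by ring
        simp_rw [h1]
        rw [integral_const_mul, gauss_sq_moment ha]
        have h2 : (0:ℝ) < 1 + 2 * (lam k * t) := by linarith
        have h3 : Real.sqrt (1 + 2 * (lam k * t)) ≠ 0 := by positivity
        field_simp
      · simp only [hf, hk, if_false, one_mul]
        exact gauss_exp_moment ha
    have hprod2 : (∏ k, ∫ y, f k y ∂(gaussianReal 0 1))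
        = (lam i / (1 + 2 * (lam i * t))) * (lam j / (1 + 2 * (lam j * t))) *
            (∏ k, Real.sqrt (1 + 2 * (lam k * t)))⁻¹ := by
      calc (∏ k, ∫ y, f k y ∂(gaussianReal 0 1))
          = ∏ k, ((if k = i ∨ k = j then lam k / (1 + 2 * (lam k * t)) else 1) *
              (1 / Real.sqrt (1 + 2 * (lam k * t)))) :=
            Finset.prod_congr rfl fun k _ => hval k
        _ = (∏ k, (if k = i ∨ k = j then lam k / (1 + 2 * (lam k * t)) else 1)) *
              ∏ k, (1 / Real.sqrt (1 + 2 * (lam k * t))) := Finset.prod_mul_distrib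
        _ = (lam i / (1 + 2 * (lam i * t))) * (lam j / (1 + 2 * (lam j * t))) *
              (∏ k, Real.sqrt (1 + 2 * (lam k * t)))⁻¹ := by
            congr 1
            · calc (∏ k, if k = i ∨ k = j then lam k / (1 + 2 * (lam k * t)) else 1)
                  = ∏ k, ((if k = i then lam i / (1 + 2 * (lam i * t)) else 1) *
                      (if k = j then lam j / (1 + 2 * (lam j * t)) else 1)) :=
                  Finset.prod_congr rfl fun k _ =>
                    hsplit (fun k => lam k / (1 + 2 * (lam k * t))) k
                _ = _ := by
                  rw [Finset.prod_mul_distrib, Finset.prod_ite_eq' Finset.univ i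
                    (fun _ => lam i / (1 + 2 * (lam i * t))), Finset.prod_ite_eq' Finset.univ j
                    (fun _ => lam j / (1 + 2 * (lam j * t)))]
                  simp
            · simp [one_div, ← Finset.prod_inv_distrib]
    rw [hprod2, hr]
    simp only
    have harg : ∀ b : ℝ, 1 + b * (2 * t) = 1 + 2 * (b * t) := fun b => by ring
    simp only [harg]
    have hA : ∀ k : Fin p, (0:ℝ) < 1 + 2 * (lam k * t) := by
      intro k
      have := mul_pos (hpos k) ht
      linarith
    have hP : 0 < ∏ k, Real.sqrt (1 + 2 * (lam k * t)) :=
      Finset.prod_pos fun k _ => Real.sqrt_pos.mpr (hA k)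
    have hAi := hA i
    have hAj := hA j
    field_simp
  -- assemble
  calc (∫ ω, lam i * (ω i) ^ 2 * (lam j * (ω j) ^ 2) / (∑ k, lam k * (ω k) ^ 2) ^ 2 ∂μp)
      = ∫ ω, (∫ t in Ioi (0:ℝ), c ω * (t * Real.exp (-(S ω * t)))) ∂μp := by
        refine integral_congr_ae ?_
        filter_upwards [h0] with ω hSω
        exact hrepr ω hSω
    _ = ∫ t in Ioi (0:ℝ), (∫ ω, c ω * (t * Real.exp (-(S ω * t))) ∂μp) := by
        exact integral_integral_swap hInt
    _ = ∫ t in Ioi (0:ℝ), lam i * lam j / 2 * r (2 * t) :=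
        setIntegral_congr_fun measurableSet_Ioi hstep5
    _ = lam i * lam j / 2 * ∫ t in Ioi (0:ℝ), r (2 * t) := integral_const_mul _ _
    _ = lam i * lam j / 2 * ((2:ℝ)⁻¹ * ∫ x in Ioi (0:ℝ), r x) := by
        rw [integral_comp_mul_left_Ioi r 0 (by norm_num : (0:ℝ) < 2), mul_zero, smul_eq_mul]
    _ = lam i * lam j / 4 * ∫ x in Ioi (0:ℝ), r x := by ring
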